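/- Let ℋ be a complex Hilbert space with inner product ⟨·,·⟩ linear in the second variable, let H and T be linear maps defined on subspaces D(H) and D(T) of ℋ, and assume T is symmetric, i.e. ⟨Tφ,ψ⟩ = ⟨φ,Tψ⟩ for all φ,ψ ∈ D(T). Let D_w be a subspace of D(T) ∩ D(H) such that ⟨Hφ,Tψ⟩ − ⟨Tφ,Hψ⟩ = −i⟨φ,ψ⟩ for all φ,ψ ∈ D_w. If ψ ∈ D_w satisfies Hψ = Eψ for some real number E, then ψ = 0. -/
import Mathlib


open scoped InnerProductSpace

/-- a weak time operator `T` of `H` excludes eigenvectors of `H` from any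
weak-CCR domain. -/
theorem eigenvector_in_weak_ccr_domain_eq_zero
    {ℋ : Type*} [NormedAddCommGroup ℋ] [InnerProductSpace ℂ ℋ]
    (H T : ℋ →ₗ.[ℂ] ℋ)
    (hTsymm : ∀ φ ψ : T.domain, ⟪T φ, (ψ : ℋ)⟫_ℂ = ⟪(φ : ℋ), T ψ⟫_ℂ)
    (Dw : Submodule ℂ ℋ) (hDwT : Dw ≤ T.domain) (hDwH : Dw ≤ H.domain)
    (hccr : ∀ (φ ψ : ℋ) (hφ : φ ∈ Dw) (hψ : ψ ∈ Dw),
      ⟪H ⟨φ, hDwH hφ⟩, T ⟨ψ, hDwT hψ⟩⟫_ℂ - ⟪T ⟨φ, hDwT hφ⟩, H ⟨ψ, hDwH hψ⟩⟫_ℂ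
        = (-Complex.I) * ⟪φ, ψ⟫_ℂ)
    (ψ : ℋ) (hψ : ψ ∈ Dw) (E : ℝ)
    (heig : H ⟨ψ, hDwH hψ⟩ = (E : ℂ) • ψ) :
    ψ = 0 := by
  have h := hccr ψ ψ hψ hψ
  rw [heig, inner_smul_left, inner_smul_right, hTsymm ⟨ψ, hDwT hψ⟩ ⟨ψ, hDwT hψ⟩] at h
  simp only [Complex.conj_ofReal, sub_self] at h
  have : ⟪ψ, ψ⟫_ℂ = 0 := by
    have := h.symm
    field_simp at this
    simpa using this
  exact inner_self_eq_zero.mp this
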